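/- Suppose β_i = β ≥ 0 for all i and there exists T ≥ 0 such that for all t ≥ T the matrix A(t) is symmetric with nonnegative entries and zero diagonal, piecewise continuous in t and bounded, and λ̄ := sup_{t≥T} λ₁(βA(t) − D) < 0. Then every differentiable solution p of the time-varying n-intertwined SIS model that is componentwise nonnegative at time T satisfies ‖p(t)‖ ≤ e^{λ̄(t−T)} ‖p(T)‖ for all t ≥ T; i.e. the disease-free equilibrium is globally exponentially stable from time T onward. -/

import Mathlib

open Matrix


lemma minsq_hasDerivAt (x : ℝ) :
    HasDerivAt (fun y : ℝ => min y 0 ^ 2) (2 * min x 0) x := by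
  rcases lt_trichotomy x 0 with hx | hx | hx
  · have h : (fun y : ℝ => y ^ 2) =ᶠ[nhds x] fun y : ℝ => min y 0 ^ 2 := by
      filter_upwards [Iio_mem_nhds hx] with y hy
      rw [min_eq_left (le_of_lt hy)]
    have := (hasDerivAt_pow 2 x)
    rw [min_eq_left hx.le]
    simpa using this.congr_of_eventuallyEq h.symm
  · subst hx
    rw [hasDerivAt_iff_isLittleO]
    simp only [min_self, sub_zero, mul_zero, smul_eq_mul, zero_pow, sub_zero]
    rw [Asymptotics.isLittleO_iff]
    intro c hc
    filter_upwards [Metric.ball_mem_nhds 0 hc] with y hy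
    simp only [Metric.mem_ball, Real.dist_eq, sub_zero] at hy
    have h1 : ‖min y 0 ^ 2 - (0:ℝ) ^ 2‖ ≤ |y| * |y| := by
      have hm : min y 0 ^ 2 ≤ y ^ 2 := by
        rcases le_or_gt y 0 with h | h
        · rw [min_eq_left h]
        · rw [min_eq_right h.le]; simpa using sq_nonneg y
      have h0 : (0:ℝ) ≤ min y 0 ^ 2 - 0 ^ 2 := by nlinarith [sq_nonneg (min y 0)]
      rw [Real.norm_eq_abs, abs_of_nonneg h0]
      nlinarith [sq_abs y]
    calc ‖min y 0 ^ 2 - (0:ℝ) ^ 2‖ ≤ |y| * |y| := h1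
      _ ≤ c * ‖y‖ := mul_le_mul_of_nonneg_right hy.le (abs_nonneg _)
  · have h : (fun _ : ℝ => (0:ℝ)) =ᶠ[nhds x] fun y : ℝ => min y 0 ^ 2 := by
      filter_upwards [Ioi_mem_nhds hx] with y hy
      rw [min_eq_right (le_of_lt hy)]; norm_num
    rw [min_eq_right hx.le, mul_zero]
    simpa using (hasDerivAt_const x (0:ℝ)).congr_of_eventuallyEq h.symm

lemma expGronwall (f f' : ℝ → ℝ) (a b L : ℝ) (hab : a ≤ b)
    (hf : ∀ t ∈ Set.Icc a b, HasDerivAt f (f' t) t)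
    (hle : ∀ t ∈ Set.Icc a b, f' t ≤ L * f t) :
    f b ≤ Real.exp (L * (b - a)) * f a := by
  set g : ℝ → ℝ := fun t => f t * Real.exp (-L * (t - a)) with hg
  have hg' : ∀ t ∈ Set.Icc a b, HasDerivAt g ((f' t - L * f t) * Real.exp (-L * (t - a))) t := by
    intro t ht
    have h1 : HasDerivAt (fun t : ℝ => Real.exp (-L * (t - a))) (-L * Real.exp (-L * (t - a))) t := by
      have := (Real.hasDerivAt_exp (-L * (t - a))).comp t
        (((hasDerivAt_id t).sub_const a).const_mul (-L))
      exact this.congr_deriv (by ring)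
    have := (hf t ht).mul h1
    exact this.congr_deriv (by ring)
  have hanti : AntitoneOn g (Set.Icc a b) := by
    apply antitoneOn_of_deriv_nonpos (convex_Icc a b)
    · exact fun t ht => ((hg' t ht).continuousAt).continuousWithinAt
    · intro t ht
      rw [interior_Icc] at ht
      exact ((hg' t (Set.mem_Icc_of_Ioo ht)).differentiableAt.differentiableWithinAt)
    · intro t ht
      rw [interior_Icc] at ht
      rw [(hg' t (Set.mem_Icc_of_Ioo ht)).deriv]
      have := hle t (Set.mem_Icc_of_Ioo ht)
      have he : (0:ℝ) < Real.exp (-L * (t - a)) := Real.exp_pos _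
      nlinarith
  have := hanti (Set.left_mem_Icc.mpr hab) (Set.right_mem_Icc.mpr hab) hab
  simp only [hg, sub_self, mul_zero, Real.exp_zero, mul_one] at this
  calc f b = f b * Real.exp (-L * (b - a)) * Real.exp (L * (b - a)) := by
        rw [mul_assoc, ← Real.exp_add]; ring_nf; rw [Real.exp_zero, mul_one]
    _ ≤ f a * Real.exp (L * (b - a)) := by
        apply mul_le_mul_of_nonneg_right this (Real.exp_pos _).le
    _ = Real.exp (L * (b - a)) * f a := mul_comm _ _

lemma rayleigh_bound {n : ℕ} (M : Matrix (Fin n) (Fin n) ℝ) (hM : M.IsHermitian) (lam : ℝ)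
    (h : ∀ i, hM.eigenvalues i ≤ lam) (x : Fin n → ℝ) :
    x ⬝ᵥ (M *ᵥ x) ≤ lam * (∑ i, x i ^ 2) := by
  set U : Matrix (Fin n) (Fin n) ℝ := (hM.eigenvectorUnitary : Matrix (Fin n) (Fin n) ℝ) with hU
  set y : Fin n → ℝ := star U *ᵥ x with hy
  have hUU : U * star U = 1 := (Matrix.mem_unitaryGroup_iff).mp hM.eigenvectorUnitary.2
  have hdot : ∀ z : Fin n → ℝ, x ⬝ᵥ (U *ᵥ z) = y ⬝ᵥ z := by
    intro z
    rw [Matrix.dotProduct_mulVec, hy]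
    congr 1
    rw [Matrix.star_eq_conjTranspose, conjTranspose_eq_transpose_of_trivial,
      Matrix.mulVec_transpose]
  have key : x ⬝ᵥ (M *ᵥ x) = ∑ i, hM.eigenvalues i * y i ^ 2 := by
    conv_lhs => rw [hM.spectral_theorem, Unitary.conjStarAlgAut_apply]
    rw [← Matrix.mulVec_mulVec, ← Matrix.mulVec_mulVec, hdot]
    simp [dotProduct, Matrix.mulVec_diagonal]
    ring_nf
    exact Finset.sum_congr rfl fun i _ => by rw [hy, hU]; ring
  have key2 : ∑ i, x i ^ 2 = ∑ i, y i ^ 2 := by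
    have h1 : x ⬝ᵥ (U *ᵥ y) = y ⬝ᵥ y := hdot y
    rw [hy, Matrix.mulVec_mulVec, hUU, Matrix.one_mulVec] at h1
    simpa [dotProduct, sq] using h1
  rw [key, key2, Finset.mul_sum]
  apply Finset.sum_le_sum
  intro i _
  exact mul_le_mul_of_nonneg_right (h i) (sq_nonneg _)

set_option maxHeartbeats 1000000 in
lemma sis_nonneg {n : ℕ} (β : ℝ) (hβ : 0 ≤ β) (δ : Fin n → ℝ) (hδ : ∀ i, 0 ≤ δ i)
    (T : ℝ) (A : ℝ → Matrix (Fin n) (Fin n) ℝ)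
    (hnn : ∀ t, T ≤ t → ∀ i j, 0 ≤ A t i j)
    (hbdd : ∃ C, ∀ t, T ≤ t → ∀ i j, |A t i j| ≤ C)
    (p : ℝ → Fin n → ℝ)
    (hode : ∀ t, T ≤ t → ∀ i, HasDerivAt (fun s => p s i)
      ((1 - p t i) * β * (∑ j, A t i j * p t j) - δ i * p t i) t)
    (h0 : ∀ i, 0 ≤ p T i) :
    ∀ t, T ≤ t → ∀ i, 0 ≤ p t i := by
  intro t₀ ht₀ i₀
  obtain ⟨C₀, hC₀⟩ := hbdd
  set C : ℝ := max C₀ 0 with hCdef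
  have hC : ∀ t, T ≤ t → ∀ i j, A t i j ≤ C := fun t ht i j =>
    le_trans ((le_abs_self _).trans (hC₀ t ht i j)) (le_max_left _ _)
  have hCnn : (0:ℝ) ≤ C := le_max_right _ _
  -- bound on p over [T, t₀]
  have hcont : ContinuousOn (fun s => p s) (Set.Icc T t₀) := by
    apply continuousOn_pi.mpr
    intro i
    exact fun s hs => ((hode s hs.1 i).continuousAt).continuousWithinAt
  obtain ⟨K₀, hK₀⟩ := (isCompact_Icc (a := T) (b := t₀)).exists_bound_of_continuousOn hcont
  set K : ℝ := max K₀ 0 with hKdef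
  have hKnn : (0:ℝ) ≤ K := le_max_right _ _
  have hK : ∀ s ∈ Set.Icc T t₀, ∀ j, |p s j| ≤ K := by
    intro s hs j
    calc |p s j| = ‖p s j‖ := rfl
      _ ≤ ‖p s‖ := norm_le_pi_norm (p s) j
      _ ≤ K₀ := hK₀ s hs
      _ ≤ K := le_max_left _ _
  -- the negative-part energy
  set m : ℝ → Fin n → ℝ := fun s j => min (p s j) 0 with hmdef
  set f : ℝ → ℝ := fun s => ∑ j, m s j ^ 2 with hfdef
  set d : ℝ → Fin n → ℝ := fun s j =>
    (1 - p s j) * β * (∑ k, A s j k * p s k) - δ j * p s j with hddef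
  set f' : ℝ → ℝ := fun s => ∑ j, 2 * m s j * d s j with hf'def
  set L : ℝ := 2 * n * β * (1 + K) * C with hLdef
  have hf : ∀ s ∈ Set.Icc T t₀, HasDerivAt f (f' s) s := by
    intro s hs
    apply HasDerivAt.fun_sum
    intro j _
    exact (minsq_hasDerivAt (p s j)).comp s (hode s hs.1 j)
  have hmnp : ∀ s j, m s j ≤ 0 := fun s j => min_le_right _ _
  have hmp : ∀ s j, m s j ≤ p s j := fun s j => min_le_left _ _
  have hle : ∀ s ∈ Set.Icc T t₀, f' s ≤ L * f s := by
    intro s hs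
    have hsT : T ≤ s := hs.1
    have claim : ∀ j, 2 * m s j * d s j ≤
        β * (1 + K) * C * (∑ k, (m s j ^ 2 + m s k ^ 2)) := by
      intro j
      set S : ℝ := ∑ k, A s j k * p s k with hSdef
      set Q : ℝ := ∑ k, (m s j ^ 2 + m s k ^ 2) with hQdef
      have hQnn : 0 ≤ Q := Finset.sum_nonneg fun k _ => by positivity
      have hmp2 : m s j * p s j = m s j ^ 2 := by
        rcases le_or_gt (p s j) 0 with h | h
        · simp only [hmdef, min_eq_left h]; ring
        · simp [hmdef, min_eq_right h.le]
      have hδpart : 2 * m s j * (- (δ j * p s j)) ≤ 0 := by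
        have : 2 * m s j * (- (δ j * p s j)) = -2 * δ j * (m s j * p s j) := by ring
        rw [this, hmp2]
        have := hδ j
        nlinarith [sq_nonneg (m s j)]
      have hmain : 2 * m s j * ((1 - p s j) * β * S) ≤ β * (1 + K) * C * Q := by
        rcases le_or_gt 0 (p s j) with h | h
        · have hm0 : m s j = 0 := by simp [hmdef, min_eq_right h]
          rw [hm0]
          have : 0 ≤ β * (1 + K) * C * Q := by positivity
          linarith
        · have hmj : m s j = p s j := by simp [hmdef, min_eq_left h.le]
          have h1p : (0:ℝ) < 1 - p s j := by linarith
          have h1pK : 1 - p s j ≤ 1 + K := by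
            have habs := abs_le.mp (hK s hs j)
            linarith [habs.1]
          have hSm : (∑ k, A s j k * m s k) ≤ S := by
            apply Finset.sum_le_sum
            intro k _
            exact mul_le_mul_of_nonneg_left (hmp s k) (hnn s hsT j k)
          have hmS : m s j * S ≤ ∑ k, A s j k * (m s j * m s k) := by
            have h1 : m s j * S ≤ m s j * (∑ k, A s j k * m s k) :=
              mul_le_mul_of_nonpos_left hSm (by rw [hmj]; exact h.le)
            calc m s j * S ≤ m s j * (∑ k, A s j k * m s k) := h1
              _ = ∑ k, A s j k * (m s j * m s k) := by
                  rw [Finset.mul_sum]; exact Finset.sum_congr rfl fun k _ => by ring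
          have hsum2 : (∑ k, A s j k * (m s j * m s k)) ≤ (C / 2) * Q := by
            rw [hQdef, Finset.mul_sum]
            apply Finset.sum_le_sum
            intro k _
            have hprod : 0 ≤ m s j * m s k := by nlinarith [hmnp s j, hmnp s k]
            have h1 : A s j k * (m s j * m s k) ≤ C * (m s j * m s k) :=
              mul_le_mul_of_nonneg_right (hC s hsT j k) hprod
            have h2 : m s j * m s k ≤ (m s j ^ 2 + m s k ^ 2) / 2 := by nlinarith [sq_nonneg (m s j - m s k)]
            nlinarith
          have hmSQ : m s j * S ≤ (C / 2) * Q := le_trans hmS hsum2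
          have e1 : 2 * m s j * ((1 - p s j) * β * S) = (2 * β * (1 - p s j)) * (m s j * S) := by ring
          have hcoef : 0 ≤ 2 * β * (1 - p s j) := by positivity
          have e2 : (2 * β * (1 - p s j)) * (m s j * S) ≤ (2 * β * (1 - p s j)) * ((C/2) * Q) :=
            mul_le_mul_of_nonneg_left hmSQ hcoef
          have e3 : (2 * β * (1 - p s j)) * ((C/2) * Q) ≤ (2 * β * (1 + K)) * ((C/2) * Q) := by
            have hc2 : 2 * β * (1 - p s j) ≤ 2 * β * (1 + K) := by nlinarith
            have : 0 ≤ (C/2) * Q := by positivity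
            exact mul_le_mul_of_nonneg_right hc2 this
          have e4 : (2 * β * (1 + K)) * ((C/2) * Q) = β * (1 + K) * C * Q := by ring
          linarith [e1 ▸ (le_trans e2 (e3.trans_eq e4))]
      calc 2 * m s j * d s j
          = 2 * m s j * ((1 - p s j) * β * S) + 2 * m s j * (-(δ j * p s j)) := by
            rw [hddef]; ring
        _ ≤ β * (1 + K) * C * Q + 0 := add_le_add hmain hδpart
        _ = β * (1 + K) * C * Q := by ring
    calc f' s ≤ ∑ j, β * (1 + K) * C * (∑ k, (m s j ^ 2 + m s k ^ 2)) :=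
          Finset.sum_le_sum fun j _ => claim j
      _ = β * (1 + K) * C * (∑ j, ∑ k, (m s j ^ 2 + m s k ^ 2)) := by rw [Finset.mul_sum]
      _ = L * f s := by
          have : (∑ j, ∑ k : Fin n, (m s j ^ 2 + m s k ^ 2)) = 2 * n * f s := by
            simp only [Finset.sum_add_distrib, Finset.sum_const, Finset.card_fin, nsmul_eq_mul]
            rw [hfdef]
            push_cast
            rw [← Finset.mul_sum]
            ring
          rw [this, hLdef, hfdef]
          ring
  have hfT : f T = 0 := by
    rw [hfdef]
    apply Finset.sum_eq_zero
    intro j _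
    simp [hmdef, min_eq_right (h0 j)]
  have hend := expGronwall f f' T t₀ L ht₀ hf hle
  rw [hfT, mul_zero] at hend
  have hfnn : 0 ≤ f t₀ := Finset.sum_nonneg fun j _ => sq_nonneg _
  have hfz : f t₀ = 0 := le_antisymm hend hfnn
  have : m t₀ i₀ ^ 2 = 0 := by
    have := (Finset.sum_eq_zero_iff_of_nonneg (fun j _ => sq_nonneg (m t₀ j))).mp hfz i₀ (Finset.mem_univ _)
    exact this
  have hm0 : m t₀ i₀ = 0 := by
    exact pow_eq_zero_iff (n := 2) (by norm_num) |>.mp this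
  by_contra hneg
  push_neg at hneg
  have : m t₀ i₀ = p t₀ i₀ := by simp [hmdef, min_eq_left hneg.le]
  linarith [this ▸ hm0]

/-- Euclidean norm of a vector in `ℝⁿ`. -/
noncomputable def eucNorm {n : ℕ} (x : Fin n → ℝ) : ℝ := Real.sqrt (∑ i, x i ^ 2)

set_option maxHeartbeats 1000000 in
/-- **GES of the DFE from time `T` onward (homogeneous, undirected case).**
Suppose `β_i = β ≥ 0` for all `i` and there is `T ≥ 0` such that for all `t ≥ T` the
matrix `A(t)` is symmetric with nonnegative entries and zero diagonal and bounded, and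
`λ̄ := sup_{t≥T} λ₁(βA(t) − D) < 0` (encoded: `lam < 0` bounds the largest eigenvalue
for every `t ≥ T`).  Then every differentiable solution componentwise nonnegative at
time `T` satisfies `‖p(t)‖ ≤ e^{λ̄(t−T)} ‖p(T)‖` for all `t ≥ T`. -/
theorem sis_homogeneous_symmetric_GES_from_time_T
    {n : ℕ} (β : ℝ) (hβ : 0 ≤ β) (δ : Fin n → ℝ) (hδ : ∀ i, 0 ≤ δ i)
    (T : ℝ) (hT : 0 ≤ T)
    (A : ℝ → Matrix (Fin n) (Fin n) ℝ)
    (hsym : ∀ t, T ≤ t → (A t).IsSymm)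
    (hnn : ∀ t, T ≤ t → ∀ i j, 0 ≤ A t i j)
    (hdiag : ∀ t, T ≤ t → ∀ i, A t i i = 0)
    (hbdd : ∃ C, ∀ t, T ≤ t → ∀ i j, |A t i j| ≤ C)
    (lam : ℝ) (hlam : lam < 0)
    (hsup : ∀ t, T ≤ t →
      ∀ h : (β • A t - Matrix.diagonal δ).IsHermitian, (⨆ i, h.eigenvalues i) ≤ lam)
    (p : ℝ → Fin n → ℝ)
    (hode : ∀ t, T ≤ t → ∀ i, HasDerivAt (fun s => p s i)
      ((1 - p t i) * β * (∑ j, A t i j * p t j) - δ i * p t i) t)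
    (h0 : ∀ i, 0 ≤ p T i) :
    ∀ t, T ≤ t → eucNorm (p t) ≤ Real.exp (lam * (t - T)) * eucNorm (p T) := by
  have hnonneg : ∀ t, T ≤ t → ∀ i, 0 ≤ p t i :=
    sis_nonneg β hβ δ hδ T A hnn hbdd p hode h0
  intro t ht
  have hherm : ∀ s, T ≤ s → (β • A s - Matrix.diagonal δ).IsHermitian := by
    intro s hs
    rw [Matrix.IsHermitian, conjTranspose_eq_transpose_of_trivial, transpose_sub,
      transpose_smul, (hsym s hs).eq, Matrix.diagonal_transpose]
  have heig : ∀ s, T ≤ s → ∀ h : (β • A s - Matrix.diagonal δ).IsHermitian,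
      ∀ i, h.eigenvalues i ≤ lam := by
    intro s hs h i
    exact le_trans (le_ciSup (Set.Finite.bddAbove (Set.finite_range _)) i) (hsup s hs h)
  have hg : ∀ s ∈ Set.Icc T t, HasDerivAt (fun u => ∑ i, p u i ^ 2)
      (∑ i, 2 * p s i *
        ((1 - p s i) * β * (∑ j, A s i j * p s j) - δ i * p s i)) s := by
    intro s hs
    apply HasDerivAt.fun_sum
    intro i _
    have h2 := (hasDerivAt_pow 2 (p s i)).comp s (hode s hs.1 i)
    have h3 : ((fun x : ℝ => x ^ 2) ∘ (fun u => p u i)) = fun u => p u i ^ 2 := rfl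
    rw [h3] at h2
    exact h2.congr_deriv (by norm_num)
  have hle : ∀ s ∈ Set.Icc T t,
      (∑ i, 2 * p s i * ((1 - p s i) * β * (∑ j, A s i j * p s j) - δ i * p s i))
        ≤ (2 * lam) * ∑ i, p s i ^ 2 := by
    intro s hs
    have hsT : T ≤ s := hs.1
    have hM := hherm s hsT
    have hray := rayleigh_bound _ hM lam (heig s hsT hM) (p s)
    have hdot : p s ⬝ᵥ ((β • A s - Matrix.diagonal δ) *ᵥ p s)
        = ∑ i, p s i * (β * (∑ j, A s i j * p s j) - δ i * p s i) := by
      simp only [Matrix.sub_mulVec, Matrix.smul_mulVec, dotProduct, Pi.sub_apply,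
        Pi.smul_apply, smul_eq_mul, Matrix.mulVec_diagonal]
      apply Finset.sum_congr rfl
      intro i _
      simp [Matrix.mulVec, dotProduct]
    rw [hdot] at hray
    have hextra : 0 ≤ ∑ i, p s i ^ 2 * (∑ j, A s i j * p s j) := by
      apply Finset.sum_nonneg
      intro i _
      apply mul_nonneg (sq_nonneg _)
      exact Finset.sum_nonneg fun j _ =>
        mul_nonneg (hnn s hsT i j) (hnonneg s hsT j)
    have hsplit : (∑ i, 2 * p s i * ((1 - p s i) * β * (∑ j, A s i j * p s j) - δ i * p s i))
        = 2 * (∑ i, p s i * (β * (∑ j, A s i j * p s j) - δ i * p s i))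
          - 2 * β * (∑ i, p s i ^ 2 * (∑ j, A s i j * p s j)) := by
      rw [Finset.mul_sum, Finset.mul_sum, ← Finset.sum_sub_distrib]
      apply Finset.sum_congr rfl
      intro i _
      ring
    rw [hsplit]
    nlinarith
  have hend := expGronwall (fun u => ∑ i, p u i ^ 2)
    (fun s => ∑ i, 2 * p s i * ((1 - p s i) * β * (∑ j, A s i j * p s j) - δ i * p s i))
    T t (2 * lam) ht hg hle
  have hsq : Real.sqrt (∑ i, p t i ^ 2)
      ≤ Real.sqrt (Real.exp (2 * lam * (t - T)) * ∑ i, p T i ^ 2) :=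
    Real.sqrt_le_sqrt hend
  have hexp : Real.sqrt (Real.exp (2 * lam * (t - T)) * ∑ i, p T i ^ 2)
      = Real.exp (lam * (t - T)) * Real.sqrt (∑ i, p T i ^ 2) := by
    rw [Real.sqrt_mul (Real.exp_nonneg _)]
    congr 1
    rw [show (2:ℝ) * lam * (t - T) = lam * (t - T) + lam * (t - T) by ring, Real.exp_add]
    exact Real.sqrt_mul_self (Real.exp_nonneg _)
  rw [hexp] at hsq
  exact hsq
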